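/- arXiv:1309.4734 — 6 statements merged into one kernel-verified Lean document; each statement's English description precedes it below -/
import Mathlib

section
/- Let R > 0, let f : [0,R) → ℝ be continuously differentiable with f(0) = 0, f'(0) = −1, and f' strictly increasing on [0,R), let n_f(t) := t − f(t)/f'(t) on (0,ν) with ν := sup{t ∈ [0,R) : f'(t) < 0}, and let K ≥ 1 and 0 ≤ ϑ < 1/K. Then there exists δ ∈ (0,ν) such that (1+ϑ)·|n_f(t)|/t + ϑ < 1/K for all t ∈ (0,δ); in particular ρ := sup{δ ∈ (0,ν) : (1+ϑ)·|n_f(t)|/t + ϑ < 1/K for all t ∈ (0,δ)} is positive. -/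
/-- For a majorant function `f`, constants `K ≥ 1`, `0 ≤ ϑ < 1/K`,
there exists `δ ∈ (0,ν)` such that `(1+ϑ)·|n_f t|/t + ϑ < 1/K` for all `t ∈ (0,δ)`;
in particular `ρ := sup {δ ∈ (0,ν) : ∀ t ∈ (0,δ), (1+ϑ)·|n_f t|/t + ϑ < 1/K}`
is positive. -/
theorem statement_3
    (R : ℝ) (hR : 0 < R) (f f' : ℝ → ℝ)
    (hderiv : ∀ t ∈ Set.Ico (0:ℝ) R, HasDerivWithinAt f (f' t) (Set.Ico (0:ℝ) R) t)
    (hcont : ContinuousOn f' (Set.Ico (0:ℝ) R))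
    (h0 : f 0 = 0) (h0' : f' 0 = -1)
    (hmono : StrictMonoOn f' (Set.Ico (0:ℝ) R))
    (ν : ℝ) (hν : ν = sSup {t ∈ Set.Ico (0:ℝ) R | f' t < 0})
    (K ϑ : ℝ) (hK : 1 ≤ K) (hϑ0 : 0 ≤ ϑ) (hϑ : ϑ < 1 / K) :
    (∃ δ ∈ Set.Ioo (0:ℝ) ν, ∀ t ∈ Set.Ioo (0:ℝ) δ,
        (1 + ϑ) * |t - f t / f' t| / t + ϑ < 1 / K) ∧
    0 < sSup {δ ∈ Set.Ioo (0:ℝ) ν | ∀ t ∈ Set.Ioo (0:ℝ) δ,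
        (1 + ϑ) * |t - f t / f' t| / t + ϑ < 1 / K} := by
  have hKpos : (0:ℝ) < K := lt_of_lt_of_le one_pos hK
  have hϑ1 : (0:ℝ) < 1 + ϑ := by linarith
  set ε : ℝ := (1 / K - ϑ) / (1 + ϑ) with hε
  have hεpos : 0 < ε := div_pos (by linarith) hϑ1
  set η : ℝ := min ε 1 / 3 with hηdef
  have hηpos : 0 < η := by
    have := lt_min hεpos one_pos
    positivity
  have hη1 : η ≤ 1 / 3 := by
    have : min ε 1 ≤ 1 := min_le_right _ _
    rw [hηdef]; linarith
  -- continuity of f' at 0 within the domain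
  have h0mem : (0:ℝ) ∈ Set.Ico (0:ℝ) R := ⟨le_refl _, hR⟩
  have hcw : ContinuousWithinAt f' (Set.Ico (0:ℝ) R) 0 := hcont 0 h0mem
  rw [Metric.continuousWithinAt_iff] at hcw
  obtain ⟨δ₁, hδ₁pos, hδ₁⟩ := hcw η hηpos
  -- for points near 0, f' is close to -1
  have hclose : ∀ t : ℝ, 0 ≤ t → t < min δ₁ R → |f' t + 1| < η := by
    intro t ht0 htm
    have h1 : t < δ₁ := lt_of_lt_of_le htm (min_le_left _ _)
    have h2 : t < R := lt_of_lt_of_le htm (min_le_right _ _)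
    have := hδ₁ ⟨ht0, h2⟩ (by simpa [Real.dist_eq, abs_of_nonneg ht0] using h1)
    simpa [Real.dist_eq, h0', sub_neg_eq_add] using this
  have hminpos : 0 < min δ₁ R := lt_min hδ₁pos hR
  set δ : ℝ := min δ₁ R / 2 with hδdef
  have hδpos : 0 < δ := by positivity
  -- set defining ν
  set S : Set ℝ := {t ∈ Set.Ico (0:ℝ) R | f' t < 0} with hS
  have hSbdd : BddAbove S := ⟨R, fun x hx => le_of_lt hx.1.2⟩
  -- a point slightly bigger than δ is in S
  set b : ℝ := min δ₁ R * (2/3) with hbdef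
  have hbS : b ∈ S := by
    have hb0 : 0 ≤ b := by positivity
    have hbm : b < min δ₁ R := by
      rw [hbdef]; nlinarith
    have hbR : b < R := lt_of_lt_of_le hbm (min_le_right _ _)
    have hfb := hclose b hb0 hbm
    have : f' b < 0 := by
      rcases abs_lt.mp hfb with ⟨_, h⟩
      linarith [hη1]
    exact ⟨⟨hb0, hbR⟩, this⟩
  have hδν : δ < ν := by
    have hbν : b ≤ ν := hν ▸ le_csSup hSbdd hbS
    have : δ < b := by rw [hδdef, hbdef]; nlinarith
    linarith
  -- continuity of f on the domain
  have hfc : ContinuousOn f (Set.Ico (0:ℝ) R) :=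
    fun x hx => (hderiv x hx).continuousWithinAt
  -- main estimate
  have hmain : ∀ t ∈ Set.Ioo (0:ℝ) δ,
      (1 + ϑ) * |t - f t / f' t| / t + ϑ < 1 / K := by
    intro t ⟨ht0, htδ⟩
    have htm : t < min δ₁ R := by rw [hδdef] at htδ; linarith [hminpos]
    have htR : t < R := lt_of_lt_of_le htm (min_le_right _ _)
    have htmem : t ∈ Set.Ico (0:ℝ) R := ⟨le_of_lt ht0, htR⟩
    have hft := hclose t (le_of_lt ht0) htm
    rcases abs_lt.mp hft with ⟨hftl, hftr⟩
    have hftneg : f' t < 0 := by linarith [hη1]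
    -- MVT on [0,t]
    have hsub : Set.Icc (0:ℝ) t ⊆ Set.Ico (0:ℝ) R :=
      fun x hx => ⟨hx.1, lt_of_le_of_lt hx.2 htR⟩
    have hfc' : ContinuousOn f (Set.Icc (0:ℝ) t) := hfc.mono hsub
    have hder' : ∀ x ∈ Set.Ioo (0:ℝ) t, HasDerivAt f (f' x) x := by
      intro x hx
      have hxmem : x ∈ Set.Ico (0:ℝ) R := ⟨le_of_lt hx.1, lt_trans hx.2 htR⟩
      exact (hderiv x hxmem).hasDerivAt (Ico_mem_nhds hx.1 (lt_trans hx.2 htR))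
    obtain ⟨c, hc, hcval⟩ := exists_hasDerivAt_eq_slope f f' ht0 hfc' hder'
    have hcmem : c ∈ Set.Ico (0:ℝ) R := ⟨le_of_lt hc.1, lt_trans hc.2 htR⟩
    have hfc_le : f' c ≤ f' t := le_of_lt (hmono hcmem htmem hc.2)
    have hfc_ge : -1 ≤ f' c := by
      have := hmono h0mem hcmem hc.1
      rw [h0'] at this; linarith
    have hft_eq : f t = f' c * t := by
      rw [hcval]; field_simp [h0]; rw [h0]; ring
    -- compute the key quantity
    have hkey : |t - f t / f' t| / t = (f' t - f' c) / (-f' t) := by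
      have hne : f' t ≠ 0 := ne_of_lt hftneg
      have : t - f t / f' t = t * ((f' t - f' c) / f' t) := by
        rw [hft_eq]; field_simp
      rw [this, abs_mul, abs_of_pos ht0, abs_div]
      rw [abs_of_nonneg (by linarith : 0 ≤ f' t - f' c),
        abs_of_neg hftneg]
      field_simp
    have hbound : (f' t - f' c) / (-f' t) < ε := by
      have h1 : f' t - f' c < η := by linarith
      have h2 : 1 - η < -f' t := by linarith
      have h3 : (0:ℝ) < 1 - η := by linarith [hη1]
      have hηε : η ≤ ε / 3 := by
        have : min ε 1 ≤ ε := min_le_left _ _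
        rw [hηdef]; linarith
      rw [div_lt_iff₀ (by linarith : (0:ℝ) < -f' t)]
      nlinarith [mul_le_mul_of_nonneg_left (le_of_lt h2) (le_of_lt hεpos)]
    have hq : |t - f t / f' t| / t < ε := hkey ▸ hbound
    have heq : (1 + ϑ) * ε = 1 / K - ϑ := by
      rw [hε]; field_simp
    have : (1 + ϑ) * |t - f t / f' t| / t = (1 + ϑ) * (|t - f t / f' t| / t) :=
      mul_div_assoc _ _ _
    rw [this]
    have h6 := mul_lt_mul_of_pos_left hq hϑ1
    linarith
  refine ⟨⟨δ, ⟨hδpos, hδν⟩, hmain⟩, ?_⟩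
  have hDbdd : BddAbove {δ ∈ Set.Ioo (0:ℝ) ν | ∀ t ∈ Set.Ioo (0:ℝ) δ,
      (1 + ϑ) * |t - f t / f' t| / t + ϑ < 1 / K} :=
    ⟨ν, fun x hx => le_of_lt hx.1.2⟩
  exact lt_of_lt_of_le hδpos (le_csSup hDbdd ⟨⟨hδpos, hδν⟩, hmain⟩)
end

section
/- Let R > 0 and let f : [0,R) → ℝ be continuously differentiable with f(0) = 0, f'(0) = −1, f' strictly increasing on [0,R), and f' convex on [0,R). Then for each fixed τ ∈ (0,1), the map t ↦ (f'(t) − f'(τ·t))/t is positive and increasing (nondecreasing) on (0,ν), where ν := sup{t ∈ [0,R) : f'(t) < 0}. -/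
/-- If additionally `f'` is convex on `[0,R)`, then for each fixed
`τ ∈ (0,1)` the map `t ↦ (f' t - f' (τ·t))/t` is positive and nondecreasing on
`(0,ν)`. -/
theorem statement_6
    (R : ℝ) (hR : 0 < R) (f f' : ℝ → ℝ)
    (hderiv : ∀ t ∈ Set.Ico (0:ℝ) R, HasDerivWithinAt f (f' t) (Set.Ico (0:ℝ) R) t)
    (hcont : ContinuousOn f' (Set.Ico (0:ℝ) R))
    (h0 : f 0 = 0) (h0' : f' 0 = -1)
    (hmono : StrictMonoOn f' (Set.Ico (0:ℝ) R))
    (hconv : ConvexOn ℝ (Set.Ico (0:ℝ) R) f')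
    (ν : ℝ) (hν : ν = sSup {t ∈ Set.Ico (0:ℝ) R | f' t < 0}) :
    ∀ τ ∈ Set.Ioo (0:ℝ) 1,
      (∀ t ∈ Set.Ioo (0:ℝ) ν, 0 < (f' t - f' (τ * t)) / t) ∧
      MonotoneOn (fun t => (f' t - f' (τ * t)) / t) (Set.Ioo (0:ℝ) ν) := by
  intro τ hτ
  obtain ⟨hτ0, hτ1⟩ := hτ
  have hνR : ν ≤ R := by
    rw [hν]
    apply Real.sSup_le
    · rintro x ⟨⟨hx0, hxR⟩, -⟩; exact hxR.le
    · exact hR.le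
  have hmem : ∀ t ∈ Set.Ioo (0:ℝ) ν,
      t ∈ Set.Ico (0:ℝ) R ∧ τ * t ∈ Set.Ico (0:ℝ) R ∧ τ * t < t := by
    intro t ht
    have ht0 := ht.1
    have htR : t < R := lt_of_lt_of_le ht.2 hνR
    have h1 : τ * t < t := by nlinarith
    exact ⟨⟨ht0.le, htR⟩, ⟨by positivity, lt_trans h1 htR⟩, h1⟩
  constructor
  · intro t ht
    obtain ⟨h1, h2, h3⟩ := hmem t ht
    have hlt : f' (τ * t) < f' t := hmono h2 h1 h3
    exact div_pos (by linarith) ht.1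
  · intro s hs t ht hst
    obtain ⟨hsR, hτsR, hτs⟩ := hmem s hs
    obtain ⟨htR, hτtR, hτt⟩ := hmem t ht
    rcases eq_or_lt_of_le hst with rfl | hst
    · exact le_refl _
    have hτst : τ * s < τ * t := by nlinarith
    -- slope chain
    have hA : slope f' (τ * s) s ≤ slope f' (τ * s) t := by
      apply hconv.slope_mono hτsR ⟨hsR, by simp [hτs.ne']⟩
        ⟨htR, by simp [(hτs.trans hst).ne']⟩ hst.le
    have hB : slope f' t (τ * s) ≤ slope f' t (τ * t) := by
      apply hconv.slope_mono htR ⟨hτsR, by simp [(hτs.trans hst).ne]⟩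
        ⟨hτtR, by simp [hτt.ne]⟩ hτst.le
    have hchain : slope f' (τ * s) s ≤ slope f' (τ * t) t := by
      calc slope f' (τ * s) s ≤ slope f' (τ * s) t := hA
        _ = slope f' t (τ * s) := slope_comm _ _ _
        _ ≤ slope f' t (τ * t) := hB
        _ = slope f' (τ * t) t := slope_comm _ _ _
    have hs0 : (0:ℝ) < s := hs.1
    have ht0 : (0:ℝ) < t := ht.1
    have h1τ : (0:ℝ) < 1 - τ := by linarith
    rw [div_le_div_iff₀ hs0 ht0]
    have hkey : (f' s - f' (τ * s)) / (s - τ * s) ≤ (f' t - f' (τ * t)) / (t - τ * t) := by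
      simpa [slope_def_field] using hchain
    rw [div_le_div_iff₀ (by linarith) (by linarith)] at hkey
    nlinarith
end

section
/- Let R > 0 and let f : [0,R) → ℝ be continuously differentiable with f(0) = 0, f'(0) = −1, f' strictly increasing on [0,R), and f' convex on [0,R). Then the function t ↦ |n_f(t)|/t², where n_f(t) := t − f(t)/f'(t), is increasing (nondecreasing) on (0,ν), where ν := sup{t ∈ [0,R) : f'(t) < 0}. -/
open Set intervalIntegral

/-- Two-argument monotonicity of secant slopes of a convex function. -/
lemma slope_mono_two {s : Set ℝ} {g : ℝ → ℝ} (hg : ConvexOn ℝ s g) {x1 x2 y1 y2 : ℝ}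
    (hx1 : x1 ∈ s) (hx2 : x2 ∈ s) (hy1 : y1 ∈ s) (hy2 : y2 ∈ s)
    (h1 : x1 ≤ y1) (h2 : x2 ≤ y2) (hx : x1 < x2) (hy : y1 < y2) :
    (g x2 - g x1) / (x2 - x1) ≤ (g y2 - g y1) / (y2 - y1) := by
  have hxy2 : x1 < y2 := lt_of_le_of_lt h1 hy
  have hA : (g x2 - g x1) / (x2 - x1) ≤ (g y2 - g x1) / (y2 - x1) :=
    hg.secant_mono hx1 hx2 hy2 (ne_of_gt hx) (ne_of_gt hxy2) h2
  have hB : (g x1 - g y2) / (x1 - y2) ≤ (g y1 - g y2) / (y1 - y2) :=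
    hg.secant_mono hy2 hx1 hy1 (ne_of_lt hxy2) (ne_of_lt hy) h1
  have e1 : (g x1 - g y2) / (x1 - y2) = (g y2 - g x1) / (y2 - x1) := by
    rw [← neg_div_neg_eq]; ring_nf
  have e2 : (g y1 - g y2) / (y1 - y2) = (g y2 - g y1) / (y2 - y1) := by
    rw [← neg_div_neg_eq]; ring_nf
  rw [e1, e2] at hB
  exact hA.trans hB

/-- If additionally `f'` is convex on `[0,R)`, then
`t ↦ |n_f t| / t²` is nondecreasing on `(0,ν)`. -/
theorem statement_7
    (R : ℝ) (hR : 0 < R) (f f' : ℝ → ℝ)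
    (hderiv : ∀ t ∈ Set.Ico (0:ℝ) R, HasDerivWithinAt f (f' t) (Set.Ico (0:ℝ) R) t)
    (hcont : ContinuousOn f' (Set.Ico (0:ℝ) R))
    (h0 : f 0 = 0) (h0' : f' 0 = -1)
    (hmono : StrictMonoOn f' (Set.Ico (0:ℝ) R))
    (hconv : ConvexOn ℝ (Set.Ico (0:ℝ) R) f')
    (ν : ℝ) (hν : ν = sSup {t ∈ Set.Ico (0:ℝ) R | f' t < 0}) :
    MonotoneOn (fun t => |t - f t / f' t| / t ^ 2) (Set.Ioo (0:ℝ) ν) := by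
  have hfc : ContinuousOn f (Set.Ico (0:ℝ) R) := fun t ht => (hderiv t ht).continuousWithinAt
  have hSne : (0:ℝ) ∈ {t ∈ Set.Ico (0:ℝ) R | f' t < 0} :=
    ⟨⟨le_refl 0, hR⟩, by rw [h0']; norm_num⟩
  have hνR : ν ≤ R := by
    rw [hν]; exact csSup_le ⟨0, hSne⟩ (fun t ht => le_of_lt ht.1.2)
  -- basic facts on (0, ν)
  have hneg : ∀ t : ℝ, 0 ≤ t → t < ν → t ∈ Set.Ico (0:ℝ) R ∧ f' t < 0 := by
    intro t ht0 htν
    obtain ⟨s, hs, hts⟩ := exists_lt_of_lt_csSup ⟨0, hSne⟩ (hν ▸ htν)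
    have htR : t ∈ Set.Ico (0:ℝ) R := ⟨ht0, hts.trans hs.1.2⟩
    exact ⟨htR, lt_trans (hmono htR hs.1 hts) hs.2⟩
  -- integrability of f' on [0,t] for t < R
  have hint : ∀ t : ℝ, 0 ≤ t → t < R → IntervalIntegrable f' MeasureTheory.volume 0 t := by
    intro t ht0 htR
    apply (hcont.mono ?_).intervalIntegrable
    rw [Set.uIcc_of_le ht0]
    exact fun s hs => ⟨hs.1, lt_of_le_of_lt hs.2 htR⟩
  -- FTC
  have hftc : ∀ t : ℝ, 0 ≤ t → t < R → f t = ∫ s in (0:ℝ)..t, f' s := by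
    intro t ht0 htR
    have hIcc : Set.Icc (0:ℝ) t ⊆ Set.Ico (0:ℝ) R := fun s hs => ⟨hs.1, lt_of_le_of_lt hs.2 htR⟩
    have := intervalIntegral.integral_eq_sub_of_hasDeriv_right_of_le ht0
      (hfc.mono hIcc)
      (fun x hx => (((hderiv x ⟨le_of_lt hx.1, lt_trans hx.2 htR⟩).hasDerivAt
        (Ico_mem_nhds hx.1 (lt_trans hx.2 htR))).hasDerivWithinAt))
      (hint t ht0 htR)
    rw [this, h0, sub_zero]
  -- the integrand representation : f t - t * f' t = t * ∫ u in 0..1, (f' (t*u) - f' t)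
  have hcomp : ∀ t : ℝ, 0 < t → t < R →
      ContinuousOn (fun u : ℝ => f' (t * u)) (Set.uIcc (0:ℝ) 1) := by
    intro t ht0 htR
    apply hcont.comp ((continuous_mul_left t).continuousOn)
    intro u hu
    rw [Set.uIcc_of_le zero_le_one] at hu
    constructor
    · exact mul_nonneg ht0.le hu.1
    · calc t * u ≤ t * 1 := mul_le_mul_of_nonneg_left hu.2 ht0.le
        _ < R := by rwa [mul_one]
  have hrepr : ∀ t : ℝ, 0 < t → t < R →
      f t - t * f' t = t * ∫ u in (0:ℝ)..1, (f' (t * u) - f' t) := by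
    intro t ht0 htR
    have hI : (∫ u in (0:ℝ)..1, f' (t * u)) = t⁻¹ * ∫ s in (0:ℝ)..t, f' s := by
      have := intervalIntegral.integral_comp_mul_left (a := (0:ℝ)) (b := 1) f' (ne_of_gt ht0)
      simpa [mul_zero, mul_one] using this
    have hsub : (∫ u in (0:ℝ)..1, (f' (t * u) - f' t))
        = (∫ u in (0:ℝ)..1, f' (t * u)) - ∫ u in (0:ℝ)..1, f' t := by
      apply intervalIntegral.integral_sub
      · exact (hcomp t ht0 htR).intervalIntegrable
      · exact intervalIntegrable_const
    rw [hsub, hI, intervalIntegral.integral_const, ← hftc t ht0.le htR]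
    simp only [smul_eq_mul, sub_zero, one_mul]
    field_simp
  -- the main inequality
  intro a ha b hb hab
  rcases eq_or_lt_of_le hab with rfl | hab
  · exact le_refl _
  obtain ⟨haR, hA⟩ := hneg a ha.1.le ha.2
  obtain ⟨hbR, hB⟩ := hneg b (le_trans ha.1.le hab.le) hb.2
  have ha0 : 0 < a := ha.1
  have hb0 : 0 < b := lt_trans ha0 hab
  have hAB : f' a ≤ f' b := le_of_lt (hmono haR hbR hab)
  -- pointwise inequality on [0,1]
  have hpt : ∀ u ∈ Set.Icc (0:ℝ) 1,
      f' b * b * (f' (a * u) - f' a) ≤ f' a * a * (f' (b * u) - f' b) := by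
    intro u hu
    have hau : a * u ∈ Set.Ico (0:ℝ) R :=
      ⟨mul_nonneg ha0.le hu.1, lt_of_le_of_lt (by nlinarith [hu.2] : a * u ≤ b) hbR.2⟩
    have hbu : b * u ∈ Set.Ico (0:ℝ) R :=
      ⟨mul_nonneg hb0.le hu.1, lt_of_le_of_lt (by nlinarith [hu.2] : b * u ≤ b) hbR.2⟩
    rcases eq_or_lt_of_le hu.2 with rfl | hu1
    · simp
    have h1u : 0 < 1 - u := by linarith
    have haau : a * u < a := by nlinarith
    have hbbu : b * u < b := by nlinarith
    have habu : a * u ≤ b * u := mul_le_mul_of_nonneg_right hab.le hu.1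
    have hslope := slope_mono_two hconv hau haR hbu hbR habu hab.le haau hbbu
    have h2 := (div_le_div_iff₀ (by linarith : (0:ℝ) < a - a * u)
      (by linarith : (0:ℝ) < b - b * u)).mp hslope
    have t1 : (f' a - f' (a * u)) * b ≤ (f' b - f' (b * u)) * a := by
      refine le_of_mul_le_mul_right ?_ h1u
      calc (f' a - f' (a * u)) * b * (1 - u) = (f' a - f' (a * u)) * (b - b * u) := by ring
        _ ≤ (f' b - f' (b * u)) * (a - a * u) := h2
        _ = (f' b - f' (b * u)) * a * (1 - u) := by ring
    have hs : 0 ≤ f' b - f' (b * u) :=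
      sub_nonneg.2 ((hmono.monotoneOn) hbu hbR hbbu.le)
    have p1 : (-f' b) * ((f' a - f' (a * u)) * b) ≤ (-f' b) * ((f' b - f' (b * u)) * a) :=
      mul_le_mul_of_nonneg_left t1 (by linarith)
    have p2 : (-f' b) * ((f' b - f' (b * u)) * a) ≤ (-f' a) * ((f' b - f' (b * u)) * a) :=
      mul_le_mul_of_nonneg_right (by linarith) (mul_nonneg hs ha0.le)
    nlinarith [p1, p2]
  -- integral comparison
  have hia : IntervalIntegrable (fun u => f' b * b * (f' (a * u) - f' a))
      MeasureTheory.volume 0 1 :=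
    (continuousOn_const.mul ((hcomp a ha0 (lt_of_lt_of_le ha.2 hνR)).sub
      continuousOn_const)).intervalIntegrable
  have hib : IntervalIntegrable (fun u => f' a * a * (f' (b * u) - f' b))
      MeasureTheory.volume 0 1 :=
    (continuousOn_const.mul ((hcomp b hb0 (lt_of_lt_of_le hb.2 hνR)).sub
      continuousOn_const)).intervalIntegrable
  have hmain : f' b * b * (∫ u in (0:ℝ)..1, (f' (a * u) - f' a))
      ≤ f' a * a * (∫ u in (0:ℝ)..1, (f' (b * u) - f' b)) := by
    rw [← intervalIntegral.integral_const_mul, ← intervalIntegral.integral_const_mul]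
    exact intervalIntegral.integral_mono_on zero_le_one hia hib hpt
  -- key cleared inequality
  have key : f' b * b ^ 2 * (f a - a * f' a) ≤ f' a * a ^ 2 * (f b - b * f' b) := by
    rw [hrepr a ha0 (lt_of_lt_of_le ha.2 hνR), hrepr b hb0 (lt_of_lt_of_le hb.2 hνR)]
    calc f' b * b ^ 2 * (a * ∫ u in (0:ℝ)..1, (f' (a * u) - f' a))
        = (a * b) * (f' b * b * ∫ u in (0:ℝ)..1, (f' (a * u) - f' a)) := by ring
      _ ≤ (a * b) * (f' a * a * ∫ u in (0:ℝ)..1, (f' (b * u) - f' b)) := by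
          apply mul_le_mul_of_nonneg_left _ (by positivity)
          rw [mul_assoc, mul_assoc] at hmain ⊢; exact hmain
      _ = f' a * a ^ 2 * (b * ∫ u in (0:ℝ)..1, (f' (b * u) - f' b)) := by ring
  -- nonpositivity of n_f on (0, ν)
  have hXle : ∀ t : ℝ, 0 < t → t < ν → f t - t * f' t ≤ 0 := by
    intro t ht0 htν
    obtain ⟨htR, _⟩ := hneg t ht0.le htν
    have h1 : f t ≤ t * f' t := by
      rw [hftc t ht0.le htR.2]
      have := intervalIntegral.integral_mono_on ht0.le (hint t ht0.le htR.2)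
        (_root_.intervalIntegrable_const (c := f' t))
        (fun s hs => (hmono.monotoneOn) ⟨hs.1, lt_of_le_of_lt hs.2 htR.2⟩ htR hs.2)
      simpa [mul_comm] using this
    linarith
  have hXa := hXle a ha0 ha.2
  have hXb := hXle b hb0 hb.2
  have hA0 : f' a ≠ 0 := ne_of_lt hA
  have hB0 : f' b ≠ 0 := ne_of_lt hB
  have hna : a - f a / f' a ≤ 0 := by
    have e : a - f a / f' a = (a * f' a - f a) / f' a := by field_simp
    rw [e]
    exact div_nonpos_iff.2 (Or.inl ⟨by linarith, hA.le⟩)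
  have hnb : b - f b / f' b ≤ 0 := by
    have e : b - f b / f' b = (b * f' b - f b) / f' b := by field_simp
    rw [e]
    exact div_nonpos_iff.2 (Or.inl ⟨by linarith, hB.le⟩)
  simp only
  rw [abs_of_nonpos hna, abs_of_nonpos hnb,
    div_le_div_iff₀ (by positivity) (by positivity)]
  have hABpos : 0 < f' a * f' b := mul_pos_of_neg_of_neg hA hB
  refine le_of_mul_le_mul_right ?_ hABpos
  calc -(a - f a / f' a) * b ^ 2 * (f' a * f' b)
      = f' b * b ^ 2 * (f a - a * f' a) := by field_simp; ring
    _ ≤ f' a * a ^ 2 * (f b - b * f' b) := key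
    _ = -(b - f b / f' b) * a ^ 2 * (f' a * f' b) := by field_simp; ring
end

section
/- Let R > 0, let f : [0,R) → ℝ be continuously differentiable with f(0) = 0, f'(0) = −1, and f' strictly increasing on [0,R), let ν := sup{t ∈ [0,R) : f'(t) < 0} and n_f(t) := t − f(t)/f'(t), let K ≥ 1 and 0 ≤ ϑ < 1/K, and let ρ := sup{δ ∈ (0,ν) : (1+ϑ)·|n_f(t)|/t + ϑ < 1/K for all t ∈ (0,δ)}. Suppose (d_k)_{k≥0} is a sequence with d_k ∈ (0,ρ) for all k and d_{k+1} ≤ K·[(1+ϑ)·|n_f(d_k)|/d_k + ϑ]·d_k for all k ≥ 0. Then (d_k) is strictly decreasing and converges to 0. -/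
/-- If `(d_k) ⊆ (0,ρ)` satisfies
`d_{k+1} ≤ K·[(1+ϑ)·|n_f(d_k)|/d_k + ϑ]·d_k`, then `(d_k)` is strictly decreasing
and converges to `0`. -/
theorem statement_8
    (R : ℝ) (hR : 0 < R) (f f' : ℝ → ℝ)
    (hderiv : ∀ t ∈ Set.Ico (0:ℝ) R, HasDerivWithinAt f (f' t) (Set.Ico (0:ℝ) R) t)
    (hcont : ContinuousOn f' (Set.Ico (0:ℝ) R))
    (h0 : f 0 = 0) (h0' : f' 0 = -1)
    (hmono : StrictMonoOn f' (Set.Ico (0:ℝ) R))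
    (ν : ℝ) (hν : ν = sSup {t ∈ Set.Ico (0:ℝ) R | f' t < 0})
    (K ϑ : ℝ) (hK : 1 ≤ K) (hϑ0 : 0 ≤ ϑ) (hϑ : ϑ < 1 / K)
    (ρ : ℝ) (hρ : ρ = sSup {δ ∈ Set.Ioo (0:ℝ) ν | ∀ t ∈ Set.Ioo (0:ℝ) δ,
        (1 + ϑ) * |t - f t / f' t| / t + ϑ < 1 / K})
    (d : ℕ → ℝ) (hd : ∀ k, d k ∈ Set.Ioo (0:ℝ) ρ)
    (hrec : ∀ k, d (k + 1) ≤
        K * ((1 + ϑ) * |d k - f (d k) / f' (d k)| / d k + ϑ) * d k) :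
    StrictAnti d ∧ Filter.Tendsto d Filter.atTop (nhds 0) := by
  have hK0 : (0:ℝ) < K := lt_of_lt_of_le one_pos hK
  set S := {δ ∈ Set.Ioo (0:ℝ) ν | ∀ t ∈ Set.Ioo (0:ℝ) δ,
      (1 + ϑ) * |t - f t / f' t| / t + ϑ < 1 / K} with hS
  -- key: every t ∈ (0,ρ) satisfies the contraction bound, and t < ν
  have hP : ∀ t, 0 < t → t < ρ →
      ((1 + ϑ) * |t - f t / f' t| / t + ϑ < 1 / K) ∧ t < ν := by
    intro t ht htρ
    rw [hρ] at htρ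
    have hne : S.Nonempty := by
      by_contra h
      rw [Set.not_nonempty_iff_eq_empty] at h
      rw [h, Real.sSup_empty] at htρ
      linarith
    obtain ⟨δ, hδS, htδ⟩ := exists_lt_of_lt_csSup hne htρ
    exact ⟨hδS.2 t ⟨ht, htδ⟩, lt_trans htδ hδS.1.2⟩
  -- strict anti
  have hstep : ∀ k, d (k + 1) < d k := by
    intro k
    have hk := hd k
    have h1 := (hP (d k) hk.1 hk.2).1
    have h2 : K * ((1 + ϑ) * |d k - f (d k) / f' (d k)| / d k + ϑ) < 1 := by
      have := mul_lt_mul_of_pos_left h1 hK0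
      rwa [mul_one_div, div_self (ne_of_gt hK0)] at this
    calc d (k + 1) ≤ K * ((1 + ϑ) * |d k - f (d k) / f' (d k)| / d k + ϑ) * d k := hrec k
      _ < 1 * d k := mul_lt_mul_of_pos_right h2 hk.1
      _ = d k := one_mul _
  have hanti : StrictAnti d := strictAnti_nat_of_succ_lt hstep
  refine ⟨hanti, ?_⟩
  -- limit
  have hbdd : BddBelow (Set.range d) := ⟨0, by rintro x ⟨k, rfl⟩; exact (hd k).1.le⟩
  have hdL : Filter.Tendsto d Filter.atTop (nhds (⨅ k, d k)) :=
    tendsto_atTop_ciInf hanti.antitone hbdd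
  set L := ⨅ k, d k with hLdef
  have hL0 : 0 ≤ L := le_ciInf fun k => (hd k).1.le
  rcases eq_or_lt_of_le hL0 with h | hLpos
  · rwa [← h] at hdL
  exfalso
  have hLρ : L < ρ := lt_of_le_of_lt (ciInf_le hbdd 0) (hd 0).2
  obtain ⟨hPL, hLν⟩ := hP L hLpos hLρ
  -- ν ≤ R
  have hmem0 : (0:ℝ) ∈ {t ∈ Set.Ico (0:ℝ) R | f' t < 0} := ⟨⟨le_refl _, hR⟩, by rw [h0']; norm_num⟩
  have hνR : ν ≤ R := by
    rw [hν]
    exact csSup_le ⟨0, hmem0⟩ fun x hx => hx.1.2.le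
  have hLR : L < R := lt_of_lt_of_le hLν hνR
  have hLmem : L ∈ Set.Ico (0:ℝ) R := ⟨hLpos.le, hLR⟩
  -- f' L < 0
  have hf'L : f' L < 0 := by
    obtain ⟨s, hsmem, hLs⟩ := exists_lt_of_lt_csSup ⟨0, hmem0⟩ (hν ▸ hLν)
    exact lt_trans (hmono hLmem hsmem.1 hLs) hsmem.2
  have hf'ne : f' L ≠ 0 := ne_of_lt hf'L
  have hLne : L ≠ 0 := ne_of_gt hLpos
  -- continuity at L
  have hnhds : Set.Ico (0:ℝ) R ∈ nhds L := Ico_mem_nhds hLpos hLR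
  have hcf : ContinuousAt f L :=
    ((hderiv L hLmem).continuousWithinAt).continuousAt hnhds
  have hcf' : ContinuousAt f' L := (hcont L hLmem).continuousAt hnhds
  set g : ℝ → ℝ := fun t => K * ((1 + ϑ) * |t - f t / f' t| / t + ϑ) * t with hg
  have hcg : ContinuousAt g L := by
    apply ContinuousAt.mul _ continuousAt_id
    apply ContinuousAt.mul continuousAt_const
    apply ContinuousAt.add _ continuousAt_const
    apply ContinuousAt.div _ continuousAt_id hLne
    exact continuousAt_const.mul ((continuousAt_id.sub (hcf.div hcf' hf'ne)).abs)
  have htg : Filter.Tendsto (fun k => g (d k)) Filter.atTop (nhds (g L)) :=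
    hcg.tendsto.comp hdL
  have hts : Filter.Tendsto (fun k => d (k + 1)) Filter.atTop (nhds L) :=
    hdL.comp (Filter.tendsto_add_atTop_nat 1)
  have hle : L ≤ g L := le_of_tendsto_of_tendsto' hts htg fun k => hrec k
  have hgL : g L < L := by
    have h2 : K * ((1 + ϑ) * |L - f L / f' L| / L + ϑ) < 1 := by
      have := mul_lt_mul_of_pos_left hPL hK0
      rwa [mul_one_div, div_self (ne_of_gt hK0)] at this
    calc g L = K * ((1 + ϑ) * |L - f L / f' L| / L + ϑ) * L := rfl
      _ < 1 * L := mul_lt_mul_of_pos_right h2 hLpos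
      _ = L := one_mul _
  linarith
end

section
/- Let L > 0, 0 < μ ≤ 1, K ≥ 1 and 0 ≤ ϑ < 1/K. Then for every t ∈ (0, (1/L)^{1/μ}), the inequality (1+ϑ)·μ·L·t^μ/((μ+1)·(1 − L·t^μ)) + ϑ < 1/K holds if and only if t < [ (μ+1) / ( L·( μ·(1+K)/(1−K·ϑ) + 1 ) ) ]^{1/μ}; moreover [ (μ+1) / ( L·( μ·(1+K)/(1−K·ϑ) + 1 ) ) ]^{1/μ} ≤ (1/L)^{1/μ}. -/
/-- For the Hölder majorant function and constants `K ≥ 1`,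
`0 ≤ ϑ < 1/K`, for every `t ∈ (0, (1/L)^(1/μ))` the inequality
`(1+ϑ)·μ·L·t^μ/((μ+1)·(1 - L·t^μ)) + ϑ < 1/K` holds iff
`t < [(μ+1) / (L·(μ·(1+K)/(1-K·ϑ) + 1))]^(1/μ)`; moreover this bound is
`≤ (1/L)^(1/μ)`. -/
theorem statement_14
    (L μ K ϑ : ℝ) (hL : 0 < L) (hμ0 : 0 < μ) (hμ1 : μ ≤ 1)
    (hK : 1 ≤ K) (hϑ0 : 0 ≤ ϑ) (hϑ : ϑ < 1 / K) :
    (∀ t ∈ Set.Ioo (0:ℝ) ((1 / L) ^ (1 / μ)),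
      ((1 + ϑ) * μ * L * t ^ μ / ((μ + 1) * (1 - L * t ^ μ)) + ϑ < 1 / K ↔
        t < ((μ + 1) / (L * (μ * (1 + K) / (1 - K * ϑ) + 1))) ^ (1 / μ))) ∧
    ((μ + 1) / (L * (μ * (1 + K) / (1 - K * ϑ) + 1))) ^ (1 / μ)
      ≤ (1 / L) ^ (1 / μ) := by
  have hK0 : (0:ℝ) < K := lt_of_lt_of_le one_pos hK
  have hc : (0:ℝ) < 1 - K * ϑ := by
    have h1 : ϑ * K < 1 := (lt_div_iff₀ hK0).mp hϑ
    nlinarith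
  have hd : (0:ℝ) < μ * (1 + K) / (1 - K * ϑ) + 1 := by positivity
  have hec : (0:ℝ) < μ * (1 + K) + (1 - K * ϑ) := by nlinarith
  have hBeq : (μ + 1) / (L * (μ * (1 + K) / (1 - K * ϑ) + 1))
      = (μ + 1) * (1 - K * ϑ) / (L * (μ * (1 + K) + (1 - K * ϑ))) := by
    rw [div_eq_div_iff (by positivity) (by positivity)]
    field_simp
  have hB : (0:ℝ) < (μ + 1) * (1 - K * ϑ) / (L * (μ * (1 + K) + (1 - K * ϑ))) := by
    positivity
  have hBle : (μ + 1) * (1 - K * ϑ) / (L * (μ * (1 + K) + (1 - K * ϑ))) ≤ 1 / L := by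
    rw [div_le_div_iff₀ (by positivity) hL]
    nlinarith [mul_pos hμ0 hK0, mul_nonneg (mul_nonneg hμ0.le hK0.le) hϑ0,
      mul_pos hL (mul_pos hμ0 hK0),
      mul_nonneg hL.le (mul_nonneg (mul_nonneg hμ0.le hK0.le) hϑ0)]
  rw [hBeq]
  constructor
  · intro t ht
    obtain ⟨ht0, ht1⟩ := ht
    have htμ : t ^ μ < 1 / L := by
      have h2 := Real.rpow_lt_rpow ht0.le ht1 hμ0
      rwa [← Real.rpow_mul (by positivity), one_div μ, inv_mul_cancel₀ hμ0.ne',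
        Real.rpow_one] at h2
    have hx1 : L * t ^ μ < 1 := by
      have h3 := mul_lt_mul_of_pos_left htμ hL
      rwa [mul_one_div_cancel hL.ne'] at h3
    have hb : (0:ℝ) < (μ + 1) * (1 - L * t ^ μ) := by nlinarith
    have htp : (0:ℝ) < t ^ μ := Real.rpow_pos_of_pos ht0 μ
    rw [one_div μ, Real.lt_rpow_inv_iff_of_pos ht0.le hB.le hμ0,
      div_add' _ _ _ hb.ne', div_lt_div_iff₀ hb hK0,
      lt_div_iff₀ (show (0:ℝ) < L * (μ * (1 + K) + (1 - K * ϑ)) by positivity)]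
    constructor <;> intro h <;> nlinarith [h]
  · exact Real.rpow_le_rpow hB.le hBle (by positivity)
end

section
/- Let γ > 0, K ≥ 1 and 0 ≤ ϑ < 1/K. Then for every t ∈ (0, (√2 − 1)/(√2·γ)), the inequality (1+ϑ)·γ·t/(2·(1 − γ·t)² − 1) + ϑ < 1/K holds if and only if t < [ K·(1 − 3ϑ) + 4 − √( K²·(ϑ² − 6ϑ + 1) + 8·K·(1 − ϑ) + 8 ) ] / ( 4·γ·(1 − K·ϑ) ); moreover this bound is ≤ (√2 − 1)/(√2·γ). -/
private lemma smale_aux_key (K ϑ c x y : ℝ) (hK0 : 0 < K) (hcK : c = 1 - K * ϑ)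
    (hy : 0 < y) : x / y + ϑ < 1 / K ↔ K * x < c * y := by
  have h3 : K * ((1 / K - ϑ) * y) = c * y := by rw [hcK]; field_simp
  constructor
  · intro h
    have h1 : x / y < 1 / K - ϑ := by linarith
    have h2 : x < (1 / K - ϑ) * y := (div_lt_iff₀ hy).mp h1
    calc K * x < K * ((1 / K - ϑ) * y) := by nlinarith
      _ = c * y := h3
  · intro h
    have h4 : K * x < K * ((1 / K - ϑ) * y) := by rw [h3]; exact h
    have h2 : x < (1 / K - ϑ) * y := lt_of_mul_lt_mul_left h4 hK0.le
    have := (div_lt_iff₀ hy).mpr h2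
    linarith

private lemma smale_aux_iff (γ K ϑ c b s r : ℝ) (hγ : 0 < γ) (hK0 : 0 < K)
    (hϑ0 : 0 ≤ ϑ) (hc : 0 < c) (hr2 : r ^ 2 = 2) (hr0 : 0 < r) (hr1 : 1 < r)
    (hbceq : b = 4 * c + K * (1 + ϑ)) (hs0 : 0 ≤ s) (hsb : s ^ 2 = b ^ 2 - 8 * c ^ 2)
    (hcK : c = 1 - K * ϑ) (t : ℝ) (ht0 : 0 < t) (ht1 : t < (r - 1) / (r * γ)) :
    ((1 + ϑ) * γ * t / (2 * (1 - γ * t) ^ 2 - 1) + ϑ < 1 / K ↔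
      t < (b - s) / (4 * γ * c)) := by
  have hb4c : 4 * c < b := by nlinarith [mul_nonneg hK0.le hϑ0]
  have hu1 : t * (r * γ) < r - 1 := (lt_div_iff₀ (by positivity)).mp ht1
  have hu : γ * t < 1 := by nlinarith
  have hD : 0 < 2 * (1 - γ * t) ^ 2 - 1 := by
    have h1 : 1 < r * (1 - γ * t) := by nlinarith
    nlinarith [hr2, mul_pos (by linarith : (0:ℝ) < r * (1 - γ * t) - 1)
      (by linarith : (0:ℝ) < r * (1 - γ * t) + 1)]
  have hfac : ((b - s) - 4 * c * (γ * t)) * ((b + s) - 4 * c * (γ * t)) =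
      8 * c * (c * (2 * (1 - γ * t) ^ 2 - 1) - K * ((1 + ϑ) * γ * t)) := by
    linear_combination (-1 : ℝ) * hsb - 8 * c * (γ * t) * hbceq
  have hsecond : 0 < (b + s) - 4 * c * (γ * t) := by
    nlinarith [mul_lt_mul_of_pos_left hu hc, mul_pos hc (mul_pos hγ ht0)]
  rw [smale_aux_key K ϑ c ((1 + ϑ) * γ * t) _ hK0 hcK hD,
    lt_div_iff₀ (by positivity : (0:ℝ) < 4 * γ * c)]
  constructor
  · intro h
    nlinarith [hfac, hsecond, hc, h]
  · intro h
    nlinarith [hfac, hsecond, hc, h]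

/-- For the Smale majorant function and constants `K ≥ 1`,
`0 ≤ ϑ < 1/K`, for every `t ∈ (0, (√2 - 1)/(√2·γ))` the inequality
`(1+ϑ)·γ·t/(2·(1-γ·t)² - 1) + ϑ < 1/K` holds iff
`t < [K·(1-3ϑ) + 4 - √(K²·(ϑ² - 6ϑ + 1) + 8K·(1-ϑ) + 8)] / (4γ·(1-K·ϑ))`;
moreover this bound is `≤ (√2 - 1)/(√2·γ)`. -/
theorem statement_19
    (γ K ϑ : ℝ) (hγ : 0 < γ) (hK : 1 ≤ K) (hϑ0 : 0 ≤ ϑ) (hϑ : ϑ < 1 / K) :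
    (∀ t ∈ Set.Ioo (0:ℝ) ((Real.sqrt 2 - 1) / (Real.sqrt 2 * γ)),
      ((1 + ϑ) * γ * t / (2 * (1 - γ * t) ^ 2 - 1) + ϑ < 1 / K ↔
        t < (K * (1 - 3 * ϑ) + 4 -
            Real.sqrt (K ^ 2 * (ϑ ^ 2 - 6 * ϑ + 1) + 8 * K * (1 - ϑ) + 8)) /
          (4 * γ * (1 - K * ϑ)))) ∧
    (K * (1 - 3 * ϑ) + 4 -
        Real.sqrt (K ^ 2 * (ϑ ^ 2 - 6 * ϑ + 1) + 8 * K * (1 - ϑ) + 8)) /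
      (4 * γ * (1 - K * ϑ)) ≤ (Real.sqrt 2 - 1) / (Real.sqrt 2 * γ) := by
  have hK0 : (0:ℝ) < K := by linarith
  have hKϑ : K * ϑ < 1 := by
    have h := (lt_div_iff₀ hK0).mp hϑ
    nlinarith
  have hc : 0 < 1 - K * ϑ := by linarith
  have hr2 : Real.sqrt 2 ^ 2 = 2 := Real.sq_sqrt (by norm_num)
  have hr0 : 0 < Real.sqrt 2 := Real.sqrt_pos.mpr (by norm_num)
  have hr1 : 1 < Real.sqrt 2 := by nlinarith
  have hrlt2 : Real.sqrt 2 < 2 := by nlinarith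
  set r := Real.sqrt 2 with hr_def
  set c := 1 - K * ϑ with hc_def
  set b := K * (1 - 3 * ϑ) + 4 with hb_def
  set Δ := K ^ 2 * (ϑ ^ 2 - 6 * ϑ + 1) + 8 * K * (1 - ϑ) + 8 with hΔ_def
  have hbceq : b = 4 * c + K * (1 + ϑ) := by rw [hb_def, hc_def]; ring
  have hb4c : 4 * c < b := by nlinarith [mul_nonneg hK0.le hϑ0]
  have hΔeq : Δ = b ^ 2 - 8 * c ^ 2 := by rw [hΔ_def, hb_def, hc_def]; ring
  have hΔpos : 0 < Δ := by nlinarith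
  set s := Real.sqrt Δ with hs_def
  have hs0 : 0 ≤ s := Real.sqrt_nonneg _
  have hs2 : s ^ 2 = Δ := Real.sq_sqrt hΔpos.le
  have hsb : s ^ 2 = b ^ 2 - 8 * c ^ 2 := by rw [hs2, hΔeq]
  have hE : b - 4 * c + 2 * r * c ≤ s := by
    have hE0 : 0 ≤ b - 4 * c + 2 * r * c := by nlinarith
    have hE2 : (b - 4 * c + 2 * r * c) ^ 2 ≤ Δ := by
      nlinarith [hr2, hΔeq, mul_nonneg (mul_nonneg hc.le (by linarith : (0:ℝ) ≤ 2 - r))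
        (by linarith : (0:ℝ) ≤ b - 4 * c)]
    calc b - 4 * c + 2 * r * c = Real.sqrt ((b - 4 * c + 2 * r * c) ^ 2) :=
          (Real.sqrt_sq hE0).symm
      _ ≤ s := by rw [hs_def]; exact Real.sqrt_le_sqrt hE2
  clear_value s
  clear_value Δ
  clear_value b
  clear_value c
  clear_value r
  have hbound : (b - s) / (4 * γ * c) ≤ (r - 1) / (r * γ) := by
    rw [div_le_div_iff₀ (by positivity) (by positivity)]
    have h1 : b - s ≤ 4 * c - 2 * r * c := by linarith
    have h2 : (4 * c - 2 * r * c) * (r * γ) = (r - 1) * (4 * γ * c) := by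
      linear_combination (-2 * c * γ) * hr2
    calc (b - s) * (r * γ) ≤ (4 * c - 2 * r * c) * (r * γ) :=
          mul_le_mul_of_nonneg_right h1 (mul_pos hr0 hγ).le
      _ = (r - 1) * (4 * γ * c) := h2
  refine ⟨?_, hbound⟩
  intro t ht
  exact smale_aux_iff γ K ϑ c b s r hγ hK0 hϑ0 hc hr2 hr0 hr1 hbceq hs0 hsb hc_def
    t ht.1 ht.2
end
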